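/- Let n ≥ 3 and let k be a unit modulo n of multiplicative order α > 1, where α is even and k^{α/2} ≡ −1 (mod n). Then there exists a minimal prime sequence realizing wt(n,k;α), and deg(n,k;α) ≤ α/2. -/

import Mathlib

/-- The set `Ω(i, λ) = { b₁k^{i₁} + ⋯ + b_r k^{i_r} mod n : |b_j| ≤ λ_j }` in `ℤ/nℤ`. -/
def OmegaSet (n : ℕ) (k : (ZMod n)ˣ) {r : ℕ} (i : Fin r → ℕ) (lam : Fin r → ℕ) :
    Set (ZMod n) :=
  { x | ∃ b : Fin r → ℤ, (∀ j, |b j| ≤ (lam j : ℤ)) ∧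
      x = ∑ j, (b j : ZMod n) * ((k ^ i j : (ZMod n)ˣ) : ZMod n) }

/-- A `sequence`: a strictly decreasing tuple `α−1 ≥ i₁ > i₂ > ⋯ > i_r ≥ 0`. -/
def IsSeq (α : ℕ) {r : ℕ} (i : Fin r → ℕ) : Prop :=
  (∀ j, i j ≤ α - 1) ∧ StrictAnti i

/-- `wt(n, k; i)`: the minimal total weight `λ₁ + ⋯ + λ_r` over tuples `λ`
with `Ω(i,λ) = ℤ/nℤ`. -/
noncomputable def wtSeq (n : ℕ) (k : (ZMod n)ˣ) {r : ℕ} (i : Fin r → ℕ) : ℕ :=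
  sInf { s | ∃ lam : Fin r → ℕ, OmegaSet n k i lam = Set.univ ∧ ∑ j, lam j = s }

/-- The maximal sequence `Δ : α−1 > α−2 > ⋯ > 1 > 0`. -/
def DeltaSeq (α : ℕ) : Fin α → ℕ := fun j => α - 1 - (j : ℕ)

/-- `wt(n, k; α) := wt(n, k; Δ)`. -/
noncomputable def wtAlpha (n : ℕ) (k : (ZMod n)ˣ) (α : ℕ) : ℕ :=
  wtSeq n k (DeltaSeq α)

/-- The degree of a sequence: its largest entry. -/
noncomputable def degSeq {r : ℕ} (i : Fin r → ℕ) : ℕ := sSup (Set.range i)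

/-- The codegree of a sequence: its smallest nonzero entry. -/
noncomputable def codegSeq {r : ℕ} (i : Fin r → ℕ) : ℕ :=
  sInf { v | v ∈ Set.range i ∧ v ≠ 0 }

/-- A minimal prime sequence realizing `wt(n,k;α)`: a reduced sequence (i.e. one
containing `0`) of weight `wt(n,k;α)` such that no proper reduced subsequence
has weight `wt(n,k;α)`. -/
def IsMinimalPrimeSeq (n : ℕ) (k : (ZMod n)ˣ) (α : ℕ) {r : ℕ} (i : Fin r → ℕ) : Prop :=
  IsSeq α i ∧ 0 ∈ Set.range i ∧ wtSeq n k i = wtAlpha n k α ∧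
    ∀ (q : ℕ) (i₀ : Fin q → ℕ), IsSeq α i₀ → 0 ∈ Set.range i₀ →
      Set.range i₀ ⊆ Set.range i → Set.range i₀ ≠ Set.range i →
      wtSeq n k i₀ ≠ wtAlpha n k α

/-- `deg(n,k;α)`: the smallest degree of a minimal prime sequence realizing `wt(n,k;α)`. -/
noncomputable def degNK (n : ℕ) (k : (ZMod n)ˣ) (α : ℕ) : ℕ :=
  sInf { d | ∃ (r : ℕ) (i : Fin r → ℕ), IsMinimalPrimeSeq n k α i ∧ degSeq i = d }

section Aux
variable {n : ℕ} {k : (ZMod n)ˣ}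

lemma omega_transfer {r r' : ℕ} {i : Fin r → ℕ} {i' : Fin r' → ℕ}
    (f : Fin r → ℕ) (s : Fin r → ℤ) (hs : ∀ j, |s j| = 1)
    (hf : ∀ j, ∃ j', i' j' = f j)
    (hk : ∀ j, ((k ^ i j : (ZMod n)ˣ) : ZMod n)
        = ((s j : ℤ) : ZMod n) * ((k ^ f j : (ZMod n)ˣ) : ZMod n))
    {lam : Fin r → ℕ} (hlam : OmegaSet n k i lam = Set.univ) :
    ∃ lam' : Fin r' → ℕ, OmegaSet n k i' lam' = Set.univ ∧ ∑ j, lam' j = ∑ j, lam j := by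
  choose g hg using hf
  refine ⟨fun j' => ∑ j, if g j = j' then lam j else 0, ?_, ?_⟩
  · apply Set.eq_univ_of_univ_subset
    rw [← hlam]
    rintro x ⟨b, hb, rfl⟩
    refine ⟨fun j' => ∑ j, if g j = j' then s j * b j else 0, ?_, ?_⟩
    · intro j'
      calc |∑ j, if g j = j' then s j * b j else 0|
          ≤ ∑ j, |if g j = j' then s j * b j else 0| := Finset.abs_sum_le_sum_abs _ _
        _ ≤ ∑ j, (if g j = j' then (lam j : ℤ) else 0) := by
            apply Finset.sum_le_sum
            intro j _
            by_cases h : g j = j' <;> simp [h, abs_mul, hs j, hb j]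
        _ = ((∑ j, if g j = j' then lam j else 0 : ℕ) : ℤ) := by
            push_cast
            rfl
    · calc ∑ j, (b j : ZMod n) * ((k ^ i j : (ZMod n)ˣ) : ZMod n)
          = ∑ j, ((s j * b j : ℤ) : ZMod n) * ((k ^ i' (g j) : (ZMod n)ˣ) : ZMod n) := by
            refine Finset.sum_congr rfl fun j _ => ?_
            rw [hg j, hk j]
            push_cast
            ring
        _ = ∑ j, ∑ j', (if g j = j' then
              ((s j * b j : ℤ) : ZMod n) * ((k ^ i' j' : (ZMod n)ˣ) : ZMod n) else 0) := by
            refine Finset.sum_congr rfl fun j _ => ?_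
            rw [Finset.sum_ite_eq]
            simp
        _ = ∑ j', ∑ j, (if g j = j' then
              ((s j * b j : ℤ) : ZMod n) * ((k ^ i' j' : (ZMod n)ˣ) : ZMod n) else 0) :=
            Finset.sum_comm
        _ = ∑ j', ((∑ j, if g j = j' then s j * b j else 0 : ℤ) : ZMod n)
              * ((k ^ i' j' : (ZMod n)ˣ) : ZMod n) := by
            refine Finset.sum_congr rfl fun j' _ => ?_
            push_cast
            rw [Finset.sum_mul]
            refine Finset.sum_congr rfl fun j _ => ?_
            by_cases h : g j = j' <;> simp [h]
  · rw [Finset.sum_comm]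
    refine Finset.sum_congr rfl fun j _ => ?_
    rw [Finset.sum_ite_eq]
    simp

lemma wtSet_nonempty [NeZero n] {r : ℕ} {i : Fin r → ℕ} (h0 : 0 ∈ Set.range i) :
    {s | ∃ lam : Fin r → ℕ, OmegaSet n k i lam = Set.univ ∧ ∑ j, lam j = s}.Nonempty := by
  obtain ⟨j₀, hj₀⟩ := h0
  refine ⟨_, fun j => if j = j₀ then n else 0, ?_, rfl⟩
  apply Set.eq_univ_of_forall
  intro x
  refine ⟨fun j => if j = j₀ then (x.val : ℤ) else 0, ?_, ?_⟩
  · intro j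
    simp only
    rcases eq_or_ne j j₀ with h | h
    · rw [if_pos h, if_pos h, abs_of_nonneg (Int.natCast_nonneg _)]
      exact_mod_cast (ZMod.val_lt x).le
    · rw [if_neg h, if_neg h]
      simp
  · have : ∀ j : Fin r, ((if j = j₀ then (x.val : ℤ) else 0 : ℤ) : ZMod n)
        * ((k ^ i j : (ZMod n)ˣ) : ZMod n)
        = if j = j₀ then ((x.val : ℤ) : ZMod n) * ((k ^ i j : (ZMod n)ˣ) : ZMod n) else 0 := by
      intro j; by_cases h : j = j₀ <;> simp [h]
    rw [Finset.sum_congr rfl fun j _ => this j, Finset.sum_ite_eq']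
    simp [hj₀, ZMod.natCast_val, ZMod.cast_id]

lemma deltaSeq_strictAnti (m : ℕ) : StrictAnti (DeltaSeq m) := by
  intro a b hab
  have h1 : (a : ℕ) < m - 1 := lt_of_lt_of_le hab (Nat.le_pred_of_lt b.isLt)
  exact Nat.sub_lt_sub_left h1 hab

lemma range_deltaSeq (m : ℕ) : Set.range (DeltaSeq m) = Set.Iio m := by
  ext v
  constructor
  · rintro ⟨j, rfl⟩
    have := j.isLt
    simp only [DeltaSeq, Set.mem_Iio]
    omega
  · intro hv
    simp only [Set.mem_Iio] at hv
    exact ⟨⟨m - 1 - v, by omega⟩, by show m - 1 - (m - 1 - v) = v; omega⟩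

lemma pow_half_eq {m : ℕ} (hneg : k ^ m = (-1 : (ZMod n)ˣ)) (v : ℕ) :
    ((k ^ v : (ZMod n)ˣ) : ZMod n)
      = (((-1 : ℤ) ^ (v / m) : ℤ) : ZMod n) * ((k ^ (v % m) : (ZMod n)ˣ) : ZMod n) := by
  have h : (k ^ v : (ZMod n)ˣ) = ((-1) ^ (v / m)) * k ^ (v % m) := by
    conv_lhs => rw [← Nat.div_add_mod v m]
    rw [pow_add, pow_mul, hneg]
  rw [h]
  push_cast
  simp


lemma wtSeq_le_transfer [NeZero n] {r r' : ℕ} {i : Fin r → ℕ} {i' : Fin r' → ℕ}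
    (h0 : 0 ∈ Set.range i)
    (f : Fin r → ℕ) (s : Fin r → ℤ) (hs : ∀ j, |s j| = 1)
    (hf : ∀ j, ∃ j', i' j' = f j)
    (hk : ∀ j, ((k ^ i j : (ZMod n)ˣ) : ZMod n)
        = ((s j : ℤ) : ZMod n) * ((k ^ f j : (ZMod n)ˣ) : ZMod n)) :
    wtSeq n k i' ≤ wtSeq n k i := by
  have hne := wtSet_nonempty (k := k) h0
  obtain ⟨lam, hlam, hsum⟩ := Nat.sInf_mem hne
  obtain ⟨lam', h1, h2⟩ := omega_transfer f s hs hf hk hlam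
  calc wtSeq n k i' ≤ ∑ j, lam' j := Nat.sInf_le ⟨lam', h1, rfl⟩
    _ = ∑ j, lam j := h2
    _ = wtSeq n k i := hsum

lemma exists_minimalPrime (n : ℕ) (k : (ZMod n)ˣ) (α : ℕ) :
    ∀ (r : ℕ) (i : Fin r → ℕ), IsSeq α i → 0 ∈ Set.range i → wtSeq n k i = wtAlpha n k α →
      ∃ (q : ℕ) (i₀ : Fin q → ℕ), IsMinimalPrimeSeq n k α i₀ ∧ Set.range i₀ ⊆ Set.range i := by
  intro r
  induction r using Nat.strong_induction_on with
  | _ r IH =>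
    intro i hseq h0 hwt
    by_cases hmin : ∀ (q : ℕ) (i₀ : Fin q → ℕ), IsSeq α i₀ → 0 ∈ Set.range i₀ →
        Set.range i₀ ⊆ Set.range i → Set.range i₀ ≠ Set.range i → wtSeq n k i₀ ≠ wtAlpha n k α
    · exact ⟨r, i, ⟨hseq, h0, hwt, hmin⟩, subset_rfl⟩
    · push_neg at hmin
      obtain ⟨q, i₀, hseq₀, h0₀, hsub, hne, hwt₀⟩ := hmin
      have hq : q < r := by
        have h1 : Nat.card (Set.range i₀) = q := by
          rw [Nat.card_range_of_injective hseq₀.2.injective, Nat.card_eq_fintype_card,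
            Fintype.card_fin]
        have h2 : Nat.card (Set.range i) = r := by
          rw [Nat.card_range_of_injective hseq.2.injective, Nat.card_eq_fintype_card,
            Fintype.card_fin]
        have h3 := Set.ncard_lt_ncard (hsub.ssubset_of_ne hne) (Set.finite_range i)
        rw [Nat.card_coe_set_eq] at h1 h2
        omega
      obtain ⟨q', i', hmp, hsub'⟩ := IH q hq i₀ hseq₀ h0₀ hwt₀
      exact ⟨q', i', hmp, hsub'.trans hsub⟩

end Aux

/-- If `α = ord(k)` is even and `k^{α/2} ≡ −1 (mod n)`, then there is a minimal
prime sequence realizing `wt(n,k;α)`, and `deg(n,k;α) ≤ α/2`. -/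
theorem degNK_le_half_order (n : ℕ) (hn : 3 ≤ n) (k : (ZMod n)ˣ) (α : ℕ)
    (hα : orderOf k = α) (hα2 : 2 ≤ α) (heven : Even α)
    (hneg : k ^ (α / 2) = (-1 : (ZMod n)ˣ)) :
    (∃ (r : ℕ) (i : Fin r → ℕ), IsMinimalPrimeSeq n k α i) ∧
    degNK n k α ≤ α / 2 := by
  haveI : NeZero n := ⟨by omega⟩
  set m := α / 2 with hm
  have hα2m : α = 2 * m := by
    obtain ⟨t, ht⟩ := heven
    omega
  have hm1 : 1 ≤ m := by omega
  have hseqm : IsSeq α (DeltaSeq m) := by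
    refine ⟨fun j => ?_, deltaSeq_strictAnti m⟩
    have := j.isLt
    show m - 1 - (j : ℕ) ≤ α - 1
    omega
  have h0m : 0 ∈ Set.range (DeltaSeq m) := by
    rw [range_deltaSeq]
    exact Set.mem_Iio.mpr (by omega)
  have h0α : 0 ∈ Set.range (DeltaSeq α) := by
    rw [range_deltaSeq]
    exact Set.mem_Iio.mpr (by omega)
  have hwt : wtSeq n k (DeltaSeq m) = wtAlpha n k α := by
    apply le_antisymm
    · exact wtSeq_le_transfer h0α (fun j => DeltaSeq α j % m)
        (fun j => (-1 : ℤ) ^ (DeltaSeq α j / m))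
        (fun j => by simp)
        (fun j => by
          rw [range_deltaSeq] at *
          have : DeltaSeq α j % m < m := Nat.mod_lt _ (by omega)
          obtain ⟨j', hj'⟩ : DeltaSeq α j % m ∈ Set.range (DeltaSeq m) := by
            rw [range_deltaSeq]; exact Set.mem_Iio.mpr this
          exact ⟨j', hj'⟩)
        (fun j => pow_half_eq hneg _)
    · exact wtSeq_le_transfer h0m (DeltaSeq m) (fun _ => 1)
        (fun j => by simp)
        (fun j => by
          have hj : DeltaSeq m j < α := by
            have := j.isLt
            show m - 1 - (j : ℕ) < α
            omega
          obtain ⟨j', hj'⟩ : DeltaSeq m j ∈ Set.range (DeltaSeq α) := by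
            rw [range_deltaSeq]; exact Set.mem_Iio.mpr hj
          exact ⟨j', hj'⟩)
        (fun j => by push_cast; rw [one_mul])
  obtain ⟨q, i₀, hmp, hsub⟩ := exists_minimalPrime n k α m (DeltaSeq m) hseqm h0m hwt
  refine ⟨⟨q, i₀, hmp⟩, ?_⟩
  have hdeg : degSeq i₀ ≤ m := by
    have hne : (Set.range i₀).Nonempty := ⟨0, hmp.2.1⟩
    have hbdd : BddAbove (Set.range i₀) := (Set.finite_range i₀).bddAbove
    have hmem := Nat.sSup_mem hne hbdd
    have h2 := hsub hmem
    rw [range_deltaSeq] at h2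
    exact le_of_lt (Set.mem_Iio.mp h2)
  calc degNK n k α ≤ degSeq i₀ := Nat.sInf_le ⟨q, i₀, hmp, rfl⟩
    _ ≤ m := hdeg
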